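/- Let C be a q-ary code of length n and minimum distance d, and suppose every coordinate i lies in a repair group R_i ⊆ [n] of size at most N = r+ρ-1 such that the restriction of C to R_i has minimum distance at least ρ. Then log_q |C| ≤ μ · log_q B(N, ρ), where μ = ⌈(n-(d-1))/N⌉ + 1 and B(ℓ, ρ) is any log-convex (in ℓ) upper bound on the size of q-ary codes of length ℓ and distance ρ with B(0,ρ)=1. -/

import Mathlib

open Finset

noncomputable def auxH (B : ℕ → ℝ) (N s : ℕ) : ℝ :=
  if s = 0 then 1 else B N * (B ((s-1) % N) * B N ^ ((s-1) / N))

lemma aux_push (B : ℕ → ℝ)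
    (hBconv : ∀ j1 j2 : ℕ, 1 ≤ j1 → j1 ≤ j2 → B j1 * B j2 ≤ B (j1 - 1) * B (j2 + 1)) :
    ∀ k a b : ℕ, a ≤ b → k ≤ a → B a * B b ≤ B (a - k) * B (b + k) := by
  intro k
  induction k with
  | zero => intro a b _ _; simp
  | succ k IH =>
    intro a b hab hk
    have h1 : 1 ≤ a := by omega
    calc B a * B b ≤ B (a - 1) * B (b + 1) := hBconv a b h1 hab
      _ ≤ B (a - 1 - k) * B (b + 1 + k) := IH (a-1) (b+1) (by omega) (by omega)
      _ = B (a - (k+1)) * B (b + (k+1)) := by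
          congr 2 <;> omega

lemma aux_mul0 (B : ℕ → ℝ) (hB0 : B 0 = 1)
    (hBconv : ∀ j1 j2 : ℕ, 1 ≤ j1 → j1 ≤ j2 → B j1 * B j2 ≤ B (j1 - 1) * B (j2 + 1)) :
    ∀ a b : ℕ, B a * B b ≤ B (a + b) := by
  have key : ∀ a b : ℕ, a ≤ b → B a * B b ≤ B (a + b) := by
    intro a b hab
    have := aux_push B hBconv a a b hab le_rfl
    simpa [hB0, Nat.add_comm] using this
  intro a b
  rcases le_total a b with h | h
  · exact key a b h
  · rw [mul_comm, Nat.add_comm]; exact key b a h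

lemma aux_mulN (B : ℕ → ℝ)
    (hBconv : ∀ j1 j2 : ℕ, 1 ≤ j1 → j1 ≤ j2 → B j1 * B j2 ≤ B (j1 - 1) * B (j2 + 1))
    (N : ℕ) :
    ∀ a b : ℕ, a ≤ N → b ≤ N → N ≤ a + b → B a * B b ≤ B (a + b - N) * B N := by
  have key : ∀ a b : ℕ, a ≤ b → b ≤ N → N ≤ a + b → B a * B b ≤ B (a + b - N) * B N := by
    intro a b hab hbN hN
    have := aux_push B hBconv (N - b) a b hab (by omega)
    have e1 : a - (N - b) = a + b - N := by omega
    have e2 : b + (N - b) = N := by omega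
    rwa [e1, e2] at this
  intro a b haN hbN hN
  rcases le_total a b with h | h
  · exact key a b h hbN hN
  · rw [mul_comm]
    have := key b a h haN (by omega)
    rwa [Nat.add_comm b a] at this

lemma aux_merge (B : ℕ → ℝ) (hBpos : ∀ ℓ, 0 < B ℓ) (hB0 : B 0 = 1)
    (hBconv : ∀ j1 j2 : ℕ, 1 ≤ j1 → j1 ≤ j2 → B j1 * B j2 ≤ B (j1 - 1) * B (j2 + 1))
    (N : ℕ) (hN1 : 1 ≤ N) :
    ∀ a x : ℕ, 1 ≤ a → a ≤ N →
      B a * (B (x % N) * B N ^ (x / N)) ≤ B ((x + a) % N) * B N ^ ((x + a) / N) := by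
  intro a x ha1 haN
  set c := x % N with hc
  set k := x / N with hk
  have hcN : c < N := Nat.mod_lt _ (by omega)
  have hx : N * k + c = x := Nat.div_add_mod x N
  have hpow : (0:ℝ) ≤ B N ^ k := le_of_lt (pow_pos (hBpos N) k)
  rcases lt_or_ge (c + a) N with hlt | hge
  · have hxa : x + a = (c + a) + N * k := by omega
    have hmod : (x + a) % N = c + a := by
      rw [hxa, Nat.add_mul_mod_self_left, Nat.mod_eq_of_lt hlt]
    have hdiv : (x + a) / N = k := by
      rw [hxa, Nat.add_mul_div_left _ _ (by omega : 0 < N), Nat.div_eq_of_lt hlt]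
      omega
    rw [hmod, hdiv, ← mul_assoc]
    have := aux_mul0 B hB0 hBconv a c
    rw [Nat.add_comm a c] at this
    exact mul_le_mul_of_nonneg_right this hpow
  · have hr : c + a - N < N := by omega
    have hxa : x + a = (c + a - N) + N * (k + 1) := by
      have : N * (k + 1) = N * k + N := by ring
      omega
    have hmod : (x + a) % N = c + a - N := by
      rw [hxa, Nat.add_mul_mod_self_left, Nat.mod_eq_of_lt hr]
    have hdiv : (x + a) / N = k + 1 := by
      rw [hxa, Nat.add_mul_div_left _ _ (by omega : 0 < N), Nat.div_eq_of_lt hr]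
      omega
    rw [hmod, hdiv, pow_succ, ← mul_assoc]
    have := aux_mulN B hBconv N a c haN (by omega) (by omega)
    calc B a * B c * B N ^ k ≤ (B (a + c - N) * B N) * B N ^ k :=
          mul_le_mul_of_nonneg_right this hpow
      _ = B (c + a - N) * (B N ^ k * B N) := by rw [Nat.add_comm a c]; ring

theorem recursive_LRC_bound {Q : Type*} [Fintype Q] [DecidableEq Q]
    (q n d r ρ N : ℕ) (hq : Fintype.card Q = q) (hq2 : 2 ≤ q)
    (hρ : 2 ≤ ρ) (hN : N = r + ρ - 1) (hd1 : 1 ≤ d)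
    (C : Finset (Fin n → Q)) (hCne : C.Nonempty)
    (hdist : ∀ c ∈ C, ∀ c' ∈ C, c ≠ c' →
      d ≤ (univ.filter fun i => c i ≠ c' i).card)
    (R : Fin n → Finset (Fin n))
    (hmem : ∀ i, i ∈ R i) (hcard : ∀ i, (R i).card ≤ N)
    (hloc : ∀ i, ∀ c ∈ C, ∀ c' ∈ C, (∃ j ∈ R i, c j ≠ c' j) →
      ρ ≤ ((R i).filter fun j => c j ≠ c' j).card)
    (B : ℕ → ℝ) (hBpos : ∀ ℓ, 0 < B ℓ) (hB0 : B 0 = 1)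
    (hBconv : ∀ j1 j2 : ℕ, 1 ≤ j1 → j1 ≤ j2 → B j1 * B j2 ≤ B (j1 - 1) * B (j2 + 1))
    (hBbound : ∀ ℓ : ℕ, ∀ D : Finset (Fin ℓ → Q),
      (∀ c ∈ D, ∀ c' ∈ D, c ≠ c' → ρ ≤ (univ.filter fun i => c i ≠ c' i).card) →
      (D.card : ℝ) ≤ B ℓ)
    (μ : ℕ) (hμ : μ = ⌈((n - (d - 1) : ℕ) : ℝ) / N⌉₊ + 1) :
    Real.logb q C.card ≤ μ * Real.logb q (B N) := by
  have hN1 : 1 ≤ N := by omega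
  have hQne : Nonempty Q := Fintype.card_pos_iff.mp (by omega)
  -- B j ≥ 1 for all j
  have hB1 : ∀ j, 1 ≤ B j := by
    intro j
    obtain ⟨q0⟩ := hQne
    have h := hBbound j ({fun _ => q0} : Finset (Fin j → Q)) ?_
    · simpa using h
    · intro c hc c' hc' hne
      rw [Finset.mem_singleton] at hc hc'
      exact absurd (hc.trans hc'.symm) hne
  have hBmono : Monotone B := by
    apply monotone_nat_of_le_succ
    intro j
    rcases Nat.eq_zero_or_pos j with rfl | hj
    · rw [hB0]; exact hB1 1
    · calc B j = 1 * B j := (one_mul _).symm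
        _ ≤ B 1 * B j := mul_le_mul_of_nonneg_right (hB1 1) (le_of_lt (hBpos j))
        _ ≤ B 0 * B (j + 1) := hBconv 1 j le_rfl hj
        _ = B (j + 1) := by rw [hB0, one_mul]
  have hH1 : ∀ s, (1:ℝ) ≤ auxH B N s := by
    intro s
    unfold auxH
    split_ifs with h
    · exact le_refl 1
    · have h1 : (1:ℝ) ≤ B ((s-1) % N) * B N ^ ((s-1)/N) := by
        calc (1:ℝ) = 1 * 1 := by ring
          _ ≤ _ := mul_le_mul (hB1 _) (one_le_pow₀ (hB1 N)) zero_le_one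
              (le_trans zero_le_one (hB1 _))
      calc (1:ℝ) = 1 * 1 := by ring
        _ ≤ B N * (B ((s-1) % N) * B N ^ ((s-1)/N)) :=
            mul_le_mul (hB1 N) h1 zero_le_one (le_trans zero_le_one (hB1 N))
  -- key induction
  have key : ∀ s : ℕ, ∀ D : Finset (Fin n → Q), ∀ S : Finset (Fin n),
      D ⊆ C → (∀ c ∈ D, ∀ c' ∈ D, ∀ i ∈ S, c i = c' i) → Sᶜ.card ≤ s + (d - 1) →
      (D.card : ℝ) ≤ auxH B N s := by
    intro s
    induction s using Nat.strong_induction_on with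
    | _ s IH =>
    intro D S hDC hagree hcompl
    by_cases hbase : Sᶜ.card ≤ d - 1
    · have hD1 : D.card ≤ 1 := by
        rw [Finset.card_le_one]
        intro c hc c' hc'
        by_contra hne
        have hdd := hdist c (hDC hc) c' (hDC hc') hne
        have hsub : (univ.filter fun i => c i ≠ c' i) ⊆ Sᶜ := by
          intro j hj
          simp only [mem_filter, mem_univ, true_and] at hj
          rw [Finset.mem_compl]
          intro hjS
          exact hj (hagree c hc c' hc' j hjS)
        have := Finset.card_le_card hsub
        omega
      calc (D.card : ℝ) ≤ 1 := by exact_mod_cast hD1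
        _ ≤ auxH B N s := hH1 s
    · have hs1 : 1 ≤ s := by omega
      have hSne : Sᶜ.Nonempty := Finset.card_pos.mp (by omega)
      obtain ⟨i, hi⟩ := hSne
      set T := R i \ S with hT
      have hiT : i ∈ T := Finset.mem_sdiff.mpr ⟨hmem i, Finset.mem_compl.mp hi⟩
      set a := T.card with ha
      have ha1 : 1 ≤ a := Finset.card_pos.mpr ⟨i, hiT⟩
      have haN : a ≤ N := le_trans (Finset.card_le_card Finset.sdiff_subset) (hcard i)
      let e : {x // x ∈ T} ≃ Fin a := T.equivFin
      let π : (Fin n → Q) → (Fin a → Q) := fun c j => c ((e.symm j) : Fin n)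
      have hπ : ∀ (c : Fin n → Q) (j : Fin n) (hj : j ∈ T), π c (e ⟨j, hj⟩) = c j := by
        intro c j hj
        show c ((e.symm (e ⟨j, hj⟩)) : Fin n) = c j
        rw [Equiv.symm_apply_apply]
      have himg : ((D.image π).card : ℝ) ≤ B a := by
        apply hBbound
        intro v hv v' hv' hvv'
        obtain ⟨c, hc, rfl⟩ := Finset.mem_image.mp hv
        obtain ⟨c', hc', rfl⟩ := Finset.mem_image.mp hv'
        obtain ⟨j0, hj0⟩ := Function.ne_iff.mp hvv'
        have hji : ((e.symm j0 : { x // x ∈ T }) : Fin n) ∈ R i :=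
          (Finset.mem_sdiff.mp (e.symm j0).2).1
        have hρ' := hloc i c (hDC hc) c' (hDC hc') ⟨_, hji, hj0⟩
        have hsub : ((R i).filter fun j => c j ≠ c' j) ⊆ (T.filter fun j => c j ≠ c' j) := by
          intro j hj
          simp only [mem_filter] at hj ⊢
          refine ⟨Finset.mem_sdiff.mpr ⟨hj.1, ?_⟩, hj.2⟩
          intro hjS
          exact hj.2 (hagree c hc c' hc' j hjS)
        have h1 : ρ ≤ (T.filter fun j => c j ≠ c' j).card :=
          le_trans hρ' (Finset.card_le_card hsub)
        have h2 : (T.filter fun j => c j ≠ c' j).card ≤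
            (univ.filter fun j => π c j ≠ π c' j).card := by
          apply Finset.card_le_card_of_injOn
            (fun j => if h : j ∈ T then e ⟨j, h⟩ else e ⟨i, hiT⟩)
          · intro j hj
            rw [Finset.mem_coe, Finset.mem_filter] at hj
            show (if h : j ∈ T then e ⟨j, h⟩ else e ⟨i, hiT⟩) ∈ (univ.filter fun j => π c j ≠ π c' j)
            rw [dif_pos hj.1]
            simp only [mem_filter, mem_univ, true_and]
            rw [hπ c j hj.1, hπ c' j hj.1]
            exact hj.2
          · intro x hx y hy hxy
            rw [Finset.mem_coe, Finset.mem_filter] at hx hy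
            simp only [dif_pos hx.1, dif_pos hy.1] at hxy
            exact congrArg Subtype.val (e.injective hxy)
        exact le_trans h1 (le_trans h2 (le_of_eq rfl))
      have hfib : ∀ v ∈ D.image π,
          ((D.filter fun c => π c = v).card : ℝ) ≤ auxH B N (s - a) := by
        intro v _
        apply IH (s - a) (by omega) _ (S ∪ T)
        · exact le_trans (Finset.filter_subset _ _) hDC
        · intro c hc c' hc' j hj
          have hcD := Finset.mem_filter.mp hc
          have hcD' := Finset.mem_filter.mp hc'
          rcases Finset.mem_union.mp hj with hjS | hjT
          · exact hagree c hcD.1 c' hcD'.1 j hjS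
          · have e1 : c j = v (e ⟨j, hjT⟩) := by
              rw [← hπ c j hjT, hcD.2]
            have e2 : c' j = v (e ⟨j, hjT⟩) := by
              rw [← hπ c' j hjT, hcD'.2]
            rw [e1, e2]
        · have hTS : T ⊆ Sᶜ := by
            intro j hj
            exact Finset.mem_compl.mpr (Finset.mem_sdiff.mp hj).2
          have hcc : (S ∪ T)ᶜ.card = Sᶜ.card - a := by
            have hxx : (S ∪ T)ᶜ = Sᶜ \ T := by
              ext j
              simp only [Finset.mem_compl, Finset.mem_sdiff, Finset.mem_union]
              tauto
            rw [hxx, Finset.card_sdiff_of_subset hTS]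
          omega
      have hcount : (D.card : ℝ) ≤ B a * auxH B N (s - a) := by
        have hsum := Finset.card_eq_sum_card_image π D
        calc (D.card : ℝ) = ∑ v ∈ D.image π, ((D.filter fun c => π c = v).card : ℝ) := by
              rw [hsum]; push_cast; rfl
          _ ≤ ∑ v ∈ D.image π, auxH B N (s - a) := Finset.sum_le_sum hfib
          _ = ((D.image π).card : ℝ) * auxH B N (s - a) := by
              rw [Finset.sum_const, nsmul_eq_mul]
          _ ≤ B a * auxH B N (s - a) := by
              apply mul_le_mul_of_nonneg_right himg
              exact le_trans zero_le_one (hH1 _)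
      rcases le_or_gt s a with hsa | has
      · -- s - a = 0
        have h0 : s - a = 0 := by omega
        rw [h0] at hcount
        have : auxH B N 0 = 1 := by simp [auxH]
        rw [this, mul_one] at hcount
        calc (D.card : ℝ) ≤ B a := hcount
          _ ≤ B N := hBmono haN
          _ = B N * 1 := (mul_one _).symm
          _ ≤ B N * (B ((s-1) % N) * B N ^ ((s-1)/N)) := by
              apply mul_le_mul_of_nonneg_left _ (le_of_lt (hBpos N))
              calc (1:ℝ) = 1 * 1 := by ring
                _ ≤ B ((s-1) % N) * B N ^ ((s-1)/N) :=
                    mul_le_mul (hB1 _) (one_le_pow₀ (hB1 N)) zero_le_one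
                      (le_trans zero_le_one (hB1 _))
          _ = auxH B N s := by rw [auxH, if_neg (by omega)]
      · -- a < s
        have h1 : s - a ≠ 0 := by omega
        have hH : auxH B N (s - a) = B N * (B ((s-a-1) % N) * B N ^ ((s-a-1)/N)) := by
          rw [auxH, if_neg h1]
        rw [hH] at hcount
        have hmerge := aux_merge B hBpos hB0 hBconv N hN1 a (s - a - 1) ha1 haN
        have hx : s - a - 1 + a = s - 1 := by omega
        rw [hx] at hmerge
        calc (D.card : ℝ) ≤ B a * (B N * (B ((s-a-1) % N) * B N ^ ((s-a-1)/N))) := hcount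
          _ = B N * (B a * (B ((s-a-1) % N) * B N ^ ((s-a-1)/N))) := by ring
          _ ≤ B N * (B ((s-1) % N) * B N ^ ((s-1)/N)) :=
              mul_le_mul_of_nonneg_left hmerge (le_of_lt (hBpos N))
          _ = auxH B N s := by rw [auxH, if_neg (by omega)]
  -- apply with S = ∅
  set m := n - (d - 1) with hm
  have hC : (C.card : ℝ) ≤ auxH B N m := by
    apply key m C ∅ (Finset.Subset.refl C)
    · intro c _ c' _ i hi
      exact absurd hi (Finset.notMem_empty i)
    · rw [Finset.compl_empty]
      simp only [Finset.card_univ, Fintype.card_fin]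
      omega
  have hfinal : auxH B N m ≤ B N ^ μ := by
    rcases Nat.eq_zero_or_pos m with h0 | hm1
    · rw [h0]
      simp only [auxH, if_pos rfl]
      exact one_le_pow₀ (hB1 N)
    · rw [auxH, if_neg (by omega)]
      have hexp : (m-1)/N + 2 ≤ μ := by
        have h1 : ((m-1)/N) * N ≤ m - 1 := Nat.div_mul_le_self _ _
        have h2 : ((m-1)/N : ℕ) < ⌈((m:ℕ):ℝ) / N⌉₊ := by
          rw [Nat.lt_ceil]
          rw [lt_div_iff₀ (by exact_mod_cast hN1 : (0:ℝ) < N)]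
          exact_mod_cast (by omega : ((m-1)/N) * N < m)
        omega
      calc B N * (B ((m-1) % N) * B N ^ ((m-1)/N))
          ≤ B N * (B N * B N ^ ((m-1)/N)) := by
            apply mul_le_mul_of_nonneg_left _ (le_of_lt (hBpos N))
            apply mul_le_mul_of_nonneg_right
              (hBmono (le_of_lt (Nat.mod_lt _ (by omega)))) (le_of_lt (pow_pos (hBpos N) _))
        _ = B N ^ ((m-1)/N + 2) := by ring
        _ ≤ B N ^ μ := pow_le_pow_right₀ (hB1 N) hexp
  have hCpos : (0:ℝ) < C.card := by
    exact_mod_cast Finset.card_pos.mpr hCne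
  have hq1 : (1:ℝ) < q := by exact_mod_cast (by omega : 1 < q)
  rw [← Real.logb_pow]
  exact (Real.logb_le_logb hq1 hCpos (pow_pos (hBpos N) μ)).mpr (le_trans hC hfinal)
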